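/- Let n ≥ 3, m ∈ ℕ, and let ω' ∈ ℝⁿ be a unit vector. Then there exists a polynomial function p : ℝⁿ → ℝ which is homogeneous of degree m (p(tz) = t^m p(z) for all t ∈ ℝ, z ∈ ℝⁿ), harmonic on all of ℝⁿ, and satisfies p(z) = |z|^m C_m^{(n−2)/2}(⟨z,ω'⟩/|z|) for every z ≠ 0. (Each summand in the multipole expansion of |z−z'|^{2−n} is a homogeneous harmonic polynomial in z.) -/

import Mathlib

open MeasureTheory Real Filter
open scoped RealInnerProductSpace

/-- The Gegenbauer (ultraspherical) polynomial
`C_m^λ(u) = Σ_{k=0}^{⌊m/2⌋} (−1)^k (Γ(λ+m−k)/(Γ(λ) k! (m−2k)!)) (2u)^{m−2k}`. -/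
noncomputable def gegenbauer (lam : ℝ) (m : ℕ) (u : ℝ) : ℝ :=
  ∑ k ∈ Finset.range (m / 2 + 1),
    (-1 : ℝ) ^ k *
      (Real.Gamma (lam + m - k) /
        (Real.Gamma lam * (Nat.factorial k : ℝ) * (Nat.factorial (m - 2 * k) : ℝ))) *
      (2 * u) ^ (m - 2 * k)

/-- The Laplacian `Δu = Σᵢ ∂²u/∂zᵢ²` of a function on `ℝⁿ`, computed as a sum of second
directional derivatives along the standard orthonormal basis of `EuclideanSpace ℝ (Fin n)`. -/
noncomputable def laplacianE (n : ℕ) (u : EuclideanSpace ℝ (Fin n) → ℝ)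
    (z : EuclideanSpace ℝ (Fin n)) : ℝ :=
  ∑ i : Fin n,
    fderiv ℝ (fun w => fderiv ℝ u w (EuclideanSpace.single i 1)) z (EuclideanSpace.single i 1)

section Aux

variable {n : ℕ}
local notation "E" => EuclideanSpace ℝ (Fin n)

theorem hasFDerivAt_fun_pow {F : Type*} [NormedAddCommGroup F] [NormedSpace ℝ F]
    {f : F → ℝ} {f' : F →L[ℝ] ℝ} {x : F} (h : HasFDerivAt f f' x) (a : ℕ) :
    HasFDerivAt (fun y => f y ^ a) ((((a : ℝ)) * f x ^ (a - 1)) • f') x := by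
  induction a with
  | zero => simpa using hasFDerivAt_const (1:ℝ) x
  | succ a ih =>
    have h2 := h.mul ih
    have : (f * fun y => f y ^ a) = (fun y => f y ^ (a+1)) := by
      funext y; rw [Pi.mul_apply, ← pow_succ']
    rw [this] at h2
    refine h2.congr_fderiv ?_
    ext v
    simp only [ContinuousLinearMap.smul_apply, ContinuousLinearMap.add_apply, smul_eq_mul]
    cases a with
    | zero => simp
    | succ a => push_cast; ring

theorem hasFDerivAt_inner_right (v z : E) :
    HasFDerivAt (fun w : E => ⟪w, v⟫) (innerSL ℝ v) z := by
  have : (fun w : E => ⟪w, v⟫) = ⇑(innerSL ℝ v) := by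
    funext w; simp [real_inner_comm]
  rw [this]; exact (innerSL ℝ v).hasFDerivAt

theorem hasFDerivAt_inner_self' (z : E) :
    HasFDerivAt (fun w : E => ⟪w, w⟫) ((2:ℝ) • innerSL ℝ z) z := by
  have h := (hasFDerivAt_id z).inner ℝ (hasFDerivAt_id z)
  refine h.congr_fderiv ?_
  ext v
  simp [fderivInnerCLM_apply, real_inner_comm, two_mul]

theorem hasFDerivAt_term (ω : E) (a b : ℕ) (c : ℝ) (z : E) :
    HasFDerivAt (fun w : E => c * (⟪w, ω⟫ ^ a * ⟪w, w⟫ ^ b))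
      ((c * a * ⟪z, ω⟫ ^ (a-1) * ⟪z, z⟫ ^ b) • innerSL ℝ ω
        + (c * (2*b) * ⟪z, ω⟫ ^ a * ⟪z, z⟫ ^ (b-1)) • innerSL ℝ z) z := by
  have h1 := hasFDerivAt_fun_pow (hasFDerivAt_inner_right ω z) a
  have h2 := hasFDerivAt_fun_pow (hasFDerivAt_inner_self' z) b
  have h3 := (h1.mul h2).const_mul c
  refine h3.congr_fderiv ?_
  ext v
  simp only [ContinuousLinearMap.add_apply, ContinuousLinearMap.smul_apply, smul_eq_mul,
    innerSL_apply_apply]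
  ring

theorem hasFDerivAt_term3 (ω v : E) (a b : ℕ) (c : ℝ) (z : E) :
    HasFDerivAt (fun w : E => c * (⟪w, ω⟫ ^ a * ⟪w, w⟫ ^ b * ⟪w, v⟫))
      ((c * a * ⟪z, ω⟫ ^ (a-1) * ⟪z, z⟫ ^ b * ⟪z, v⟫) • innerSL ℝ ω
        + (c * (2*b) * ⟪z, ω⟫ ^ a * ⟪z, z⟫ ^ (b-1) * ⟪z, v⟫) • innerSL ℝ z
        + (c * ⟪z, ω⟫ ^ a * ⟪z, z⟫ ^ b) • innerSL ℝ v) z := by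
  have h1 := hasFDerivAt_fun_pow (hasFDerivAt_inner_right ω z) a
  have h2 := hasFDerivAt_fun_pow (hasFDerivAt_inner_self' z) b
  have h3 := ((h1.mul h2).mul (hasFDerivAt_inner_right v z)).const_mul c
  refine h3.congr_fderiv ?_
  ext u
  simp only [ContinuousLinearMap.add_apply, ContinuousLinearMap.smul_apply, smul_eq_mul,
    innerSL_apply_apply, Pi.mul_apply]
  ring

theorem sum_inner_single (x y : E) :
    ∑ i : Fin n, ⟪x, EuclideanSpace.single i 1⟫ * ⟪y, EuclideanSpace.single i 1⟫ = ⟪x, y⟫ := by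
  simp [PiLp.inner_apply, EuclideanSpace.single_apply]
  exact Finset.sum_congr rfl fun i _ => mul_comm _ _

theorem sum_inner_single_self :
    ∑ i : Fin n, ⟪(EuclideanSpace.single i 1 : E), EuclideanSpace.single i 1⟫ = (n : ℝ) := by
  simp [PiLp.inner_apply, EuclideanSpace.single_apply]

theorem summand_id (cc s r nn : ℝ) (A k : ℕ) :
    cc * ↑A * ↑(A - 1) * s ^ (A - 1 - 1) * r ^ k
      + (cc * ↑A * (2*(k:ℝ)) * s ^ (A - 1) * r ^ (k-1) + cc * (2*(k:ℝ)) * ↑A * s ^ (A - 1) * r ^ (k-1)) * s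
      + ((cc * (2*(k:ℝ)) * (2*↑(k-1)) * s ^ A * r ^ (k-1-1)) * r + (cc * (2*(k:ℝ)) * s ^ A * r ^ (k-1)) * nn)
    = cc * ↑A * ↑(A - 1) * s ^ (A - 2) * r ^ k
      + cc * (2*(k:ℝ)) * (2*↑A + 2*(k:ℝ) + nn - 2) * s ^ A * r ^ (k-1) := by
  rcases A with _ | A <;> rcases k with _ | k <;>
    simp only [Nat.succ_sub_succ, Nat.succ_sub_one, Nat.sub_zero, Nat.zero_sub, Nat.sub_self,
      Nat.cast_zero, Nat.cast_succ, pow_zero]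
  · norm_num
  · rcases k with _ | k
    · norm_num
    · simp only [Nat.succ_sub_succ, Nat.succ_sub_one, Nat.sub_zero, Nat.cast_zero, Nat.cast_succ]
      push_cast; ring
  · push_cast; ring
  · rcases k with _ | k
    · norm_num; ring
    · simp only [Nat.succ_sub_succ, Nat.succ_sub_one, Nat.sub_zero, Nat.cast_zero, Nat.cast_succ]
      push_cast; ring

theorem laplacian_sum (ω : E) (hω : ‖ω‖ = 1) (K : ℕ) (c : ℕ → ℝ) (a : ℕ → ℕ) (z : E) :
    laplacianE n (fun w => ∑ k ∈ Finset.range K, c k * (⟪w, ω⟫ ^ a k * ⟪w, w⟫ ^ k)) z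
      = ∑ k ∈ Finset.range K,
          (c k * ↑(a k) * ↑(a k - 1) * ⟪z, ω⟫ ^ (a k - 2) * ⟪z, z⟫ ^ k
           + c k * (2*(k:ℝ)) * (2*↑(a k) + 2*(k:ℝ) + (n:ℝ) - 2) * ⟪z, ω⟫ ^ (a k) * ⟪z, z⟫ ^ (k-1)) := by
  have hF : ∀ w : E, HasFDerivAt (fun w : E => ∑ k ∈ Finset.range K, c k * (⟪w, ω⟫ ^ a k * ⟪w, w⟫ ^ k))
      (∑ k ∈ Finset.range K,
        ((c k * (a k) * ⟪w, ω⟫ ^ (a k - 1) * ⟪w, w⟫ ^ k) • innerSL ℝ ω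
          + (c k * (2*k) * ⟪w, ω⟫ ^ (a k) * ⟪w, w⟫ ^ (k-1)) • innerSL ℝ w)) w :=
    fun w => HasFDerivAt.fun_sum (fun k _ => hasFDerivAt_term ω (a k) k (c k) w)
  have h1 : ∀ i : Fin n, (fun w : E => fderiv ℝ
        (fun w : E => ∑ k ∈ Finset.range K, c k * (⟪w, ω⟫ ^ a k * ⟪w, w⟫ ^ k)) w
        (EuclideanSpace.single i 1))
      = fun w : E => ∑ k ∈ Finset.range K,
          ((c k * ↑(a k) * ⟪ω, EuclideanSpace.single i 1⟫) * (⟪w, ω⟫ ^ (a k - 1) * ⟪w, w⟫ ^ k)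
            + (c k * (2*(k:ℝ))) * (⟪w, ω⟫ ^ (a k) * ⟪w, w⟫ ^ (k-1) * ⟪w, EuclideanSpace.single i 1⟫)) := by
    intro i
    funext w
    rw [(hF w).fderiv]
    simp only [ContinuousLinearMap.sum_apply, ContinuousLinearMap.add_apply,
      ContinuousLinearMap.smul_apply, smul_eq_mul, innerSL_apply_apply]
    exact Finset.sum_congr rfl fun k _ => by push_cast; ring
  have h2 : ∀ i : Fin n, ∀ w : E, HasFDerivAt (fun w : E => ∑ k ∈ Finset.range K,
          ((c k * ↑(a k) * ⟪ω, EuclideanSpace.single i 1⟫) * (⟪w, ω⟫ ^ (a k - 1) * ⟪w, w⟫ ^ k)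
            + (c k * (2*(k:ℝ))) * (⟪w, ω⟫ ^ (a k) * ⟪w, w⟫ ^ (k-1) * ⟪w, EuclideanSpace.single i 1⟫)))
      (∑ k ∈ Finset.range K,
        (((c k * ↑(a k) * ⟪ω, EuclideanSpace.single i 1⟫) * ↑(a k - 1) * ⟪w, ω⟫ ^ (a k - 1 - 1) * ⟪w, w⟫ ^ k) • innerSL ℝ ω
          + ((c k * ↑(a k) * ⟪ω, EuclideanSpace.single i 1⟫) * (2*↑k) * ⟪w, ω⟫ ^ (a k - 1) * ⟪w, w⟫ ^ (k-1)) • innerSL ℝ w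
          + (((c k * (2*(k:ℝ))) * ↑(a k) * ⟪w, ω⟫ ^ (a k - 1) * ⟪w, w⟫ ^ (k-1) * ⟪w, EuclideanSpace.single i 1⟫) • innerSL ℝ ω
            + ((c k * (2*(k:ℝ))) * (2*↑(k-1)) * ⟪w, ω⟫ ^ (a k) * ⟪w, w⟫ ^ (k-1-1) * ⟪w, EuclideanSpace.single i 1⟫) • innerSL ℝ w
            + ((c k * (2*(k:ℝ))) * ⟪w, ω⟫ ^ (a k) * ⟪w, w⟫ ^ (k-1)) • innerSL ℝ (EuclideanSpace.single i 1)))) w := by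
    intro i w
    exact HasFDerivAt.fun_sum fun k _ =>
      (hasFDerivAt_term ω (a k - 1) k (c k * ↑(a k) * ⟪ω, EuclideanSpace.single i 1⟫) w).add
        (hasFDerivAt_term3 ω (EuclideanSpace.single i 1) (a k) (k-1) (c k * (2*(k:ℝ))) w)
  rw [laplacianE]
  calc (∑ i : Fin n, fderiv ℝ
        (fun w => fderiv ℝ (fun w : E => ∑ k ∈ Finset.range K, c k * (⟪w, ω⟫ ^ a k * ⟪w, w⟫ ^ k)) w
          (EuclideanSpace.single i 1)) z (EuclideanSpace.single i 1))
      = ∑ i : Fin n, ∑ k ∈ Finset.range K,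
          (((c k * ↑(a k) * ⟪ω, EuclideanSpace.single i 1⟫) * ↑(a k - 1) * ⟪z, ω⟫ ^ (a k - 1 - 1) * ⟪z, z⟫ ^ k) * ⟪ω, EuclideanSpace.single i 1⟫
          + ((c k * ↑(a k) * ⟪ω, EuclideanSpace.single i 1⟫) * (2*↑k) * ⟪z, ω⟫ ^ (a k - 1) * ⟪z, z⟫ ^ (k-1)) * ⟪z, EuclideanSpace.single i 1⟫
          + (((c k * (2*(k:ℝ))) * ↑(a k) * ⟪z, ω⟫ ^ (a k - 1) * ⟪z, z⟫ ^ (k-1) * ⟪z, EuclideanSpace.single i 1⟫) * ⟪ω, EuclideanSpace.single i 1⟫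
            + ((c k * (2*(k:ℝ))) * (2*↑(k-1)) * ⟪z, ω⟫ ^ (a k) * ⟪z, z⟫ ^ (k-1-1) * ⟪z, EuclideanSpace.single i 1⟫) * ⟪z, EuclideanSpace.single i 1⟫
            + ((c k * (2*(k:ℝ))) * ⟪z, ω⟫ ^ (a k) * ⟪z, z⟫ ^ (k-1)) * ⟪(EuclideanSpace.single i 1 : E), EuclideanSpace.single i 1⟫)) := by
        refine Finset.sum_congr rfl fun i _ => ?_
        rw [h1 i, (h2 i z).fderiv]
        simp only [ContinuousLinearMap.sum_apply, ContinuousLinearMap.add_apply,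
          ContinuousLinearMap.smul_apply, smul_eq_mul, innerSL_apply_apply]
    _ = ∑ k ∈ Finset.range K, ∑ i : Fin n,
          ((c k * ↑(a k) * ↑(a k - 1) * ⟪z, ω⟫ ^ (a k - 1 - 1) * ⟪z, z⟫ ^ k) * (⟪ω, EuclideanSpace.single i 1⟫ * ⟪ω, EuclideanSpace.single i 1⟫)
          + (c k * ↑(a k) * (2*(k:ℝ)) * ⟪z, ω⟫ ^ (a k - 1) * ⟪z, z⟫ ^ (k-1) + c k * (2*(k:ℝ)) * ↑(a k) * ⟪z, ω⟫ ^ (a k - 1) * ⟪z, z⟫ ^ (k-1)) * (⟪z, EuclideanSpace.single i 1⟫ * ⟪ω, EuclideanSpace.single i 1⟫)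
          + ((c k * (2*(k:ℝ)) * (2*↑(k-1)) * ⟪z, ω⟫ ^ (a k) * ⟪z, z⟫ ^ (k-1-1)) * (⟪z, EuclideanSpace.single i 1⟫ * ⟪z, EuclideanSpace.single i 1⟫)
            + (c k * (2*(k:ℝ)) * ⟪z, ω⟫ ^ (a k) * ⟪z, z⟫ ^ (k-1)) * ⟪(EuclideanSpace.single i 1 : E), EuclideanSpace.single i 1⟫)) := by
        rw [Finset.sum_comm]
        exact Finset.sum_congr rfl fun k _ => Finset.sum_congr rfl fun i _ => by ring
    _ = ∑ k ∈ Finset.range K,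
          ((c k * ↑(a k) * ↑(a k - 1) * ⟪z, ω⟫ ^ (a k - 1 - 1) * ⟪z, z⟫ ^ k) * ⟪ω, ω⟫
          + (c k * ↑(a k) * (2*(k:ℝ)) * ⟪z, ω⟫ ^ (a k - 1) * ⟪z, z⟫ ^ (k-1) + c k * (2*(k:ℝ)) * ↑(a k) * ⟪z, ω⟫ ^ (a k - 1) * ⟪z, z⟫ ^ (k-1)) * ⟪z, ω⟫
          + ((c k * (2*(k:ℝ)) * (2*↑(k-1)) * ⟪z, ω⟫ ^ (a k) * ⟪z, z⟫ ^ (k-1-1)) * ⟪z, z⟫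
            + (c k * (2*(k:ℝ)) * ⟪z, ω⟫ ^ (a k) * ⟪z, z⟫ ^ (k-1)) * (n:ℝ))) := by
        refine Finset.sum_congr rfl fun k _ => ?_
        rw [Finset.sum_add_distrib, Finset.sum_add_distrib, Finset.sum_add_distrib,
          ← Finset.mul_sum, ← Finset.mul_sum, ← Finset.mul_sum, ← Finset.mul_sum,
          sum_inner_single, sum_inner_single, sum_inner_single, sum_inner_single_self]
    _ = ∑ k ∈ Finset.range K,
          (c k * ↑(a k) * ↑(a k - 1) * ⟪z, ω⟫ ^ (a k - 2) * ⟪z, z⟫ ^ k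
           + c k * (2*(k:ℝ)) * (2*↑(a k) + 2*(k:ℝ) + (n:ℝ) - 2) * ⟪z, ω⟫ ^ (a k) * ⟪z, z⟫ ^ (k-1)) := by
        have hωω : ⟪ω, ω⟫ = (1:ℝ) := by
          rw [real_inner_self_eq_norm_sq, hω]; norm_num
        refine Finset.sum_congr rfl fun k _ => ?_
        rw [hωω, mul_one]
        exact summand_id (c k) ⟪z, ω⟫ ⟪z, z⟫ (n:ℝ) (a k) k

end Aux

noncomputable def mpc (n m k : ℕ) : ℝ :=
  (-1:ℝ)^k * (Real.Gamma (((n:ℝ)-2)/2 + m - k) /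
    (Real.Gamma (((n:ℝ)-2)/2) * (Nat.factorial k : ℝ) * (Nat.factorial (m - 2*k) : ℝ)))
    * 2^(m-2*k)

theorem mpc_rec (n m k : ℕ) (hn : 3 ≤ n) (h : 2*(k+1) ≤ m) :
    mpc n m (k+1) * (2*((k+1:ℕ):ℝ)) * (2*((m - 2*(k+1) : ℕ):ℝ) + 2*((k+1:ℕ):ℝ) + (n:ℝ) - 2)
      = -(mpc n m k * ((m - 2*k : ℕ):ℝ) * ((m - 2*k - 1 : ℕ):ℝ)) := by
  obtain ⟨j, hj⟩ : ∃ j, m - 2*k = j + 2 := ⟨m - 2*k - 2, by omega⟩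
  have e1 : m - 2*(k+1) = j := by omega
  have e2 : m - 2*k - 1 = j + 1 := by omega
  have hm : (m:ℝ) = 2*k + j + 2 := by
    have : m = 2*k + j + 2 := by omega
    exact_mod_cast this
  have hlam : (0:ℝ) < ((n:ℝ)-2)/2 := by
    have : (3:ℝ) ≤ n := by exact_mod_cast hn
    linarith
  simp only [mpc, e1, e2, hj]
  have hx : ((n:ℝ)-2)/2 + ↑m - ↑(k+1) = ((n:ℝ)-2)/2 + ↑j + ↑k + 1 := by
    rw [hm]; push_cast; ring
  have hy : ((n:ℝ)-2)/2 + ↑m - ↑k = (((n:ℝ)-2)/2 + ↑j + ↑k + 1) + 1 := by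
    rw [hm]; push_cast; ring
  have hpos : (0:ℝ) < ((n:ℝ)-2)/2 + ↑j + ↑k + 1 := by positivity
  rw [hx, hy, Real.Gamma_add_one hpos.ne']
  rw [Nat.factorial_succ k, Nat.factorial_succ (j+1), Nat.factorial_succ j]
  have hg : Real.Gamma (((n:ℝ)-2)/2) ≠ 0 := (Real.Gamma_pos_of_pos hlam).ne'
  have hkf : ((Nat.factorial k : ℕ):ℝ) ≠ 0 := by
    exact_mod_cast (Nat.factorial_ne_zero k)
  have hjf : ((Nat.factorial j : ℕ):ℝ) ≠ 0 := by
    exact_mod_cast (Nat.factorial_ne_zero j)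
  push_cast
  field_simp
  ring

theorem sum_PQ_zero (M : ℕ) (P Q : ℕ → ℝ) (h0 : Q 0 = 0) (hM : P M = 0)
    (hrec : ∀ k < M, Q (k+1) = - P k) :
    ∑ k ∈ Finset.range (M+1), (P k + Q k) = 0 := by
  rw [Finset.sum_add_distrib, Finset.sum_range_succ, Finset.sum_range_succ' Q M, h0, hM,
    add_zero, add_zero,
    Finset.sum_congr rfl (fun k hk => hrec k (Finset.mem_range.mp hk)),
    ← Finset.sum_add_distrib]
  simp

noncomputable def mpoly (n m : ℕ) (ω : EuclideanSpace ℝ (Fin n)) : MvPolynomial (Fin n) ℝ :=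
  ∑ k ∈ Finset.range (m/2+1), MvPolynomial.C (mpc n m k) *
    ((∑ i, MvPolynomial.C (ω i) * MvPolynomial.X i) ^ (m - 2*k) *
      (∑ i, (MvPolynomial.X i)^2) ^ k)

theorem eval_mpoly (n m : ℕ) (ω : EuclideanSpace ℝ (Fin n)) (w : EuclideanSpace ℝ (Fin n)) :
    MvPolynomial.eval (fun i => w i) (mpoly n m ω)
      = ∑ k ∈ Finset.range (m/2+1), mpc n m k * (⟪w, ω⟫ ^ (m - 2*k) * ⟪w, w⟫ ^ k) := by
  have hs : ⟪w, ω⟫ = ∑ i, ω i * w i := by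
    simp [PiLp.inner_apply]
  have hr : ⟪w, w⟫ = ∑ i, (w i)^2 := by
    simp only [PiLp.inner_apply, RCLike.inner_apply', conj_trivial, sq]
  rw [hs, hr]
  simp only [mpoly, map_sum, map_mul, map_pow, MvPolynomial.eval_C, MvPolynomial.eval_X]

set_option maxHeartbeats 2000000 in
/-- Each summand of the multipole expansion of `|z-z'|^{2-n}` is a homogeneous harmonic
polynomial: for a unit vector `ω'` there is a polynomial `p`, homogeneous of degree `m` and
harmonic on all of `ℝⁿ`, with `p(z) = |z|^m C_m^{(n-2)/2}(⟨z,ω'⟩/|z|)` for `z ≠ 0`. -/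
theorem multipole_summand_harmonic (n : ℕ) (hn : 3 ≤ n) (m : ℕ)
    (ω' : EuclideanSpace ℝ (Fin n)) (hω' : ‖ω'‖ = 1) :
    ∃ p : MvPolynomial (Fin n) ℝ,
      (∀ (t : ℝ) (z : EuclideanSpace ℝ (Fin n)),
        MvPolynomial.eval (fun i => t * z i) p = t ^ m * MvPolynomial.eval (fun i => z i) p) ∧
      (∀ z : EuclideanSpace ℝ (Fin n),
        laplacianE n (fun w => MvPolynomial.eval (fun i => w i) p) z = 0) ∧
      (∀ z : EuclideanSpace ℝ (Fin n), z ≠ 0 →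
        MvPolynomial.eval (fun i => z i) p =
          ‖z‖ ^ m * gegenbauer (((n : ℝ) - 2) / 2) m (⟪z, ω'⟫ / ‖z‖)) := by
  refine ⟨mpoly n m ω', ?_, ?_, ?_⟩
  · -- homogeneity
    intro t z
    have h1 : (fun i => t * z i) = fun i => (t • z : EuclideanSpace ℝ (Fin n)) i := by
      funext i; simp
    rw [h1, eval_mpoly n m ω' (t • z), eval_mpoly n m ω' z, Finset.mul_sum]
    refine Finset.sum_congr rfl fun k hk => ?_
    have hk' : 2*k ≤ m := by
      have := Finset.mem_range.mp hk; omega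
    rw [real_inner_smul_left, real_inner_smul_left, real_inner_smul_right]
    have ht : t ^ (m - 2*k) * t ^ k * t ^ k = t ^ m := by
      rw [← pow_add, ← pow_add]; congr 1; omega
    calc mpc n m k * ((t * ⟪z, ω'⟫) ^ (m - 2*k) * (t * (t * ⟪z, z⟫)) ^ k)
        = (t ^ (m - 2*k) * t ^ k * t ^ k) * (mpc n m k * (⟪z, ω'⟫ ^ (m - 2*k) * ⟪z, z⟫ ^ k)) := by
          ring
      _ = t ^ m * (mpc n m k * (⟪z, ω'⟫ ^ (m - 2*k) * ⟪z, z⟫ ^ k)) := by rw [ht]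
  · -- harmonicity
    intro z
    have he : (fun w : EuclideanSpace ℝ (Fin n) => MvPolynomial.eval (fun i => w i) (mpoly n m ω'))
        = fun w : EuclideanSpace ℝ (Fin n) => ∑ k ∈ Finset.range (m/2+1),
            mpc n m k * (⟪w, ω'⟫ ^ (m - 2*k) * ⟪w, w⟫ ^ k) :=
      funext (eval_mpoly n m ω')
    rw [he]
    have hL := laplacian_sum (n := n) ω' hω' (m/2+1) (mpc n m) (fun k => m - 2*k) z
    beta_reduce at hL
    rw [hL]
    refine sum_PQ_zero (m/2)
      (fun k => mpc n m k * ↑(m - 2*k) * ↑(m - 2*k - 1) * ⟪z, ω'⟫ ^ (m - 2*k - 2) * ⟪z, z⟫ ^ k)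
      (fun k => mpc n m k * (2*(k:ℝ)) * (2*↑(m - 2*k) + 2*(k:ℝ) + (n:ℝ) - 2) * ⟪z, ω'⟫ ^ (m - 2*k) * ⟪z, z⟫ ^ (k-1))
      ?_ ?_ ?_
    · norm_num
    · have h01 : m - 2*(m/2) = 0 ∨ m - 2*(m/2) = 1 := by omega
      rcases h01 with h01 | h01 <;> simp [h01]
    · intro k hk
      have h2 : 2*(k+1) ≤ m := by omega
      have hC := mpc_rec n m k hn h2
      have e1 : m - 2*(k+1) = m - 2*k - 2 := by omega
      have e2 : (k+1) - 1 = k := rfl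
      rw [e1] at hC
      beta_reduce
      rw [e1]
      push_cast at hC ⊢
      linear_combination hC * (⟪z, ω'⟫ ^ (m - 2*k - 2) * ⟪z, z⟫ ^ k)
  · -- evaluation formula
    intro z hz
    have hN : ‖z‖ ≠ 0 := norm_ne_zero_iff.mpr hz
    rw [eval_mpoly n m ω' z, gegenbauer, Finset.mul_sum]
    refine Finset.sum_congr rfl fun k hk => ?_
    have hk' : 2*k ≤ m := by
      have := Finset.mem_range.mp hk; omega
    have hzz : ⟪z, z⟫ = ‖z‖ ^ 2 := real_inner_self_eq_norm_sq z
    have key : ‖z‖ ^ m = ‖z‖ ^ (m - 2*k) * (‖z‖ ^ 2) ^ k := by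
      rw [← pow_mul, ← pow_add]; congr 1; omega
    calc mpc n m k * (⟪z, ω'⟫ ^ (m - 2*k) * ⟪z, z⟫ ^ k)
        = (2 * ⟪z, ω'⟫) ^ (m - 2*k) * ((‖z‖ ^ 2) ^ k * ((-1:ℝ) ^ k *
            (Real.Gamma (((n:ℝ)-2)/2 + m - k) /
              (Real.Gamma (((n:ℝ)-2)/2) * (Nat.factorial k : ℝ) * (Nat.factorial (m - 2*k) : ℝ))))) := by
          rw [mpc, hzz]; ring
      _ = (‖z‖ ^ (m - 2*k) * ((2 * ⟪z, ω'⟫) / ‖z‖) ^ (m - 2*k)) * ((‖z‖ ^ 2) ^ k * ((-1:ℝ) ^ k *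
            (Real.Gamma (((n:ℝ)-2)/2 + m - k) /
              (Real.Gamma (((n:ℝ)-2)/2) * (Nat.factorial k : ℝ) * (Nat.factorial (m - 2*k) : ℝ))))) := by
          rw [← mul_pow, mul_div_cancel₀ _ hN]
      _ = ‖z‖ ^ m * ((-1:ℝ) ^ k *
            (Real.Gamma (((n:ℝ)-2)/2 + m - k) /
              (Real.Gamma (((n:ℝ)-2)/2) * (Nat.factorial k : ℝ) * (Nat.factorial (m - 2*k) : ℝ))) *
            (2 * (⟪z, ω'⟫ / ‖z‖)) ^ (m - 2*k)) := by
          rw [key, mul_div_assoc]; ring
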